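/- (Stationarity of limit points under Armijo steps) Let $F:\mathbb{R}^{n}\times\mathbb{R}^{m}\to\mathbb{R}$ be convex and continuously differentiable, $X$ compact convex, $Z$ closed convex, with $z\mapsto F(x,z)$ inf-compact for each $x\in X$. Let $\{(x^k,z^k,d^k)\}$ satisfy: (i) $x^k+d^k\in X$ and $\nabla_x F(x^k,z^k)^\top d^k<0$; (ii) the gradient-related property (if $(x^k,z^k)\to(\bar x,\bar z)$ and some $\bar d\in X-\{\bar x\}$ has $\nabla_x F(\bar x,\bar z)^\top\bar d<0$, then $\limsup_k\nabla_x F(x^k,z^k)^\top d^k<0$); (iii) $F(x^{k+1},z^{k+1})\le F(x^k+\alpha^k d^k, z^k)$ where $\alpha^k$ is the Armijo step length with fixed parameters $\beta,\sigma\in(0,1)$. Then $\{(x^k,z^k)\}$ has limit points, and every limit point $(\bar x,\bar z)$ satisfies $\nabla_x F(\bar x,\bar z)^\top(x-\bar x)\ge0$ for all $x\in X$. -/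

import Mathlib

open RealInnerProductSpace Filter Topology

private lemma inner_gradient_fderiv {E : Type*} [NormedAddCommGroup E]
    [InnerProductSpace ℝ E] [CompleteSpace E] (f : E → ℝ) (q v : E) :
    ⟪gradient f q, v⟫ = fderiv ℝ f q v := by
  rw [gradient]
  exact InnerProductSpace.toDual_symm_apply

private lemma grad_partial_eq {n m : ℕ}
    (F : EuclideanSpace ℝ (Fin n) × EuclideanSpace ℝ (Fin m) → ℝ)
    (hF : Differentiable ℝ F) (p : EuclideanSpace ℝ (Fin n))
    (q : EuclideanSpace ℝ (Fin m)) (v : EuclideanSpace ℝ (Fin n)) :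
    ⟪gradient (fun x' => F (x', q)) p, v⟫ = fderiv ℝ F (p, q) (v, 0) := by
  have h1 : HasFDerivAt (fun x' => F (x', q))
      ((fderiv ℝ F (p, q)).comp (ContinuousLinearMap.inl ℝ _ _)) p :=
    (hF (p, q)).hasFDerivAt.comp p (hasFDerivAt_prodMk_left p q)
  rw [inner_gradient_fderiv, h1.fderiv]
  simp

private lemma convex_grad_ineq {E : Type*} [NormedAddCommGroup E]
    [NormedSpace ℝ E] (f : E → ℝ) (hconv : ConvexOn ℝ Set.univ f)
    (hdiff : Differentiable ℝ f) (p q : E) :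
    f q + fderiv ℝ f q (p - q) ≤ f p := by
  set h : ℝ → ℝ := fun t => f (t • (p - q) + q) with hh
  have hhconv : ConvexOn ℝ Set.univ h := by
    have h2 := hconv.comp_affineMap (AffineMap.lineMap q p)
    have he : h = f ∘ (AffineMap.lineMap q p) := by
      funext t
      simp [hh, AffineMap.lineMap_apply_module']
    rw [he]
    simpa using h2
  have hm : HasDerivAt (fun t : ℝ => t • (p - q) + q) (p - q) 0 := by
    have := ((hasDerivAt_id (0 : ℝ)).smul_const (p - q)).add_const q
    simpa using this
  have hder : HasDerivAt h (fderiv ℝ f q (p - q)) 0 := by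
    have := (hdiff ((0 : ℝ) • (p - q) + q)).hasFDerivAt.comp_hasDerivAt 0 hm
    rw [zero_smul, zero_add] at this
    exact this
  have hs := hhconv.le_slope_of_hasDerivAt (Set.mem_univ (0 : ℝ))
    (Set.mem_univ (1 : ℝ)) one_pos hder
  rw [slope_def_field] at hs
  have h0 : h 0 = f q := by simp [hh]
  have h1 : h 1 = f p := by simp [hh]
  rw [h0, h1] at hs
  simp only [sub_zero, div_one] at hs
  linarith
set_option maxHeartbeats 1000000 in
theorem stmt15 (n m : ℕ)
    (F : EuclideanSpace ℝ (Fin n) × EuclideanSpace ℝ (Fin m) → ℝ)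
    (hFconv : ConvexOn ℝ Set.univ F) (hF : ContDiff ℝ 1 F)
    (X : Set (EuclideanSpace ℝ (Fin n))) (hX : IsCompact X) (hXconv : Convex ℝ X)
    (Z : Set (EuclideanSpace ℝ (Fin m))) (hZ : IsClosed Z) (hZconv : Convex ℝ Z)
    (hinf : ∀ x ∈ X, ∀ ℓ : ℝ, IsCompact {w ∈ Z | F (x, w) ≤ ℓ})
    (x : ℕ → EuclideanSpace ℝ (Fin n)) (z : ℕ → EuclideanSpace ℝ (Fin m))
    (d : ℕ → EuclideanSpace ℝ (Fin n)) (α : ℕ → ℝ)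
    (hxX : ∀ k, x k ∈ X) (hzZ : ∀ k, z k ∈ Z)
    (β σ : ℝ) (hβ : β ∈ Set.Ioo (0 : ℝ) 1) (hσ : σ ∈ Set.Ioo (0 : ℝ) 1)
    -- (i) feasible descent directions
    (hdX : ∀ k, x k + d k ∈ X)
    (hdesc : ∀ k, ⟪gradient (fun x' => F (x', z k)) (x k), d k⟫ < (0 : ℝ))
    -- (ii) gradient-related property (along convergent subsequences)
    (hGR : ∀ (ψ : ℕ → ℕ), StrictMono ψ →
      ∀ (xbar : EuclideanSpace ℝ (Fin n)) (zbar : EuclideanSpace ℝ (Fin m)),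
      Tendsto (fun k => (x (ψ k), z (ψ k))) atTop (𝓝 (xbar, zbar)) →
      (∃ dbar, (∃ y ∈ X, dbar = y - xbar) ∧
        ⟪gradient (fun x' => F (x', zbar)) xbar, dbar⟫ < (0 : ℝ)) →
      limsup (fun k => ⟪gradient (fun x' => F (x', z (ψ k))) (x (ψ k)), d (ψ k)⟫)
        atTop < 0)
    -- (iii) Armijo step lengths and sufficient decrease
    (hArmijo : ∀ k, ∃ j : ℕ, α k = β ^ j ∧
      (F (x k + α k • d k, z k) - F (x k, z k) ≤
        α k * σ * ⟪gradient (fun x' => F (x', z k)) (x k), d k⟫) ∧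
      ∀ i < j, ¬(F (x k + β ^ i • d k, z k) - F (x k, z k) ≤
        β ^ i * σ * ⟪gradient (fun x' => F (x', z k)) (x k), d k⟫))
    (hSD : ∀ k, F (x (k + 1), z (k + 1)) ≤ F (x k + α k • d k, z k)) :
    (∃ p : EuclideanSpace ℝ (Fin n) × EuclideanSpace ℝ (Fin m),
      MapClusterPt p atTop (fun k => (x k, z k))) ∧
    ∀ (xbar : EuclideanSpace ℝ (Fin n)) (zbar : EuclideanSpace ℝ (Fin m)),
      MapClusterPt (xbar, zbar) atTop (fun k => (x k, z k)) →
      ∀ x' ∈ X, (0 : ℝ) ≤ ⟪gradient (fun u => F (u, zbar)) xbar, x' - xbar⟫ := by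
  obtain ⟨hβ0, hβ1⟩ := hβ
  obtain ⟨hσ0, hσ1⟩ := hσ
  have hFdiff : Differentiable ℝ F := hF.differentiable one_ne_zero
  have hFcont : Continuous F := hFdiff.continuous
  -- the partial derivative pairing
  set B : (EuclideanSpace ℝ (Fin n) × EuclideanSpace ℝ (Fin m)) →
      EuclideanSpace ℝ (Fin n) → ℝ := fun w v => fderiv ℝ F w (v, 0) with hBdef
  have hgradB : ∀ (p : EuclideanSpace ℝ (Fin n)) (q : EuclideanSpace ℝ (Fin m)) v,
      ⟪gradient (fun x' => F (x', q)) p, v⟫ = B (p, q) v := fun p q v =>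
    grad_partial_eq F hFdiff p q v
  have hBcont : Continuous (fun pv :
      (EuclideanSpace ℝ (Fin n) × EuclideanSpace ℝ (Fin m)) × EuclideanSpace ℝ (Fin n) =>
      B pv.1 pv.2) := by
    apply Continuous.clm_apply
    · exact (hF.continuous_fderiv one_ne_zero).comp continuous_fst
    · exact continuous_snd.prodMk continuous_const
  set g : ℕ → ℝ := fun k => B (x k, z k) (d k) with hgdef
  have hg0 : ∀ k, g k < 0 := fun k => by
    have := hdesc k; rwa [hgradB] at this
  have hα_pos : ∀ k, 0 < α k := fun k => by
    obtain ⟨j, hj, -, -⟩ := hArmijo k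
    rw [hj]; positivity
  have harm : ∀ k, F (x k + α k • d k, z k) - F (x k, z k) ≤ α k * σ * g k := fun k => by
    obtain ⟨j, -, h2, -⟩ := hArmijo k
    rwa [hgradB] at h2
  have hdecr : ∀ k, F (x (k + 1), z (k + 1)) ≤ F (x k, z k) + α k * σ * g k := fun k =>
    (hSD k).trans (by linarith [harm k])
  have hanti : Antitone (fun k => F (x k, z k)) := antitone_nat_of_succ_le (fun k => by
    have h1 := hdecr k
    have h2 : α k * σ * g k ≤ 0 := by
      have h3 : 0 < α k * σ := mul_pos (hα_pos k) hσ0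
      nlinarith [hg0 k]
    linarith)
  have hFk0 : ∀ k, F (x k, z k) ≤ F (x 0, z 0) := fun k => hanti (Nat.zero_le k)
  -- the key Armijo-failure inequality
  have hkey : ∀ k, α k < 1 → σ * g k ≤ B (x k + (α k / β) • d k, z k) (d k) := by
    intro k hk1
    obtain ⟨j, hj, -, hfail⟩ := hArmijo k
    have hjne : j ≠ 0 := by
      intro h; rw [h] at hj; simp at hj; rw [hj] at hk1; linarith
    obtain ⟨i, rfl⟩ : ∃ i, j = i + 1 := ⟨j - 1, (Nat.succ_pred_eq_of_ne_zero hjne).symm⟩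
    have hβi : α k / β = β ^ i := by
      rw [hj, pow_succ, mul_div_assoc, div_self (ne_of_gt hβ0), mul_one]
    have hfi := hfail i (Nat.lt_succ_self i)
    rw [hgradB] at hfi
    push_neg at hfi
    -- convexity inequality for the partial function
    have hfconv : ConvexOn ℝ Set.univ (fun x' => F (x', z k)) := by
      refine ⟨convex_univ, fun p _ q _ a b ha hb hab => ?_⟩
      have h2 := hFconv.2 (Set.mem_univ (p, z k)) (Set.mem_univ (q, z k)) ha hb hab
      have he : a • ((p, z k) : EuclideanSpace ℝ (Fin n) × EuclideanSpace ℝ (Fin m)) +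
          b • (q, z k) = (a • p + b • q, z k) := by
        rw [Prod.smul_mk, Prod.smul_mk, Prod.mk_add_mk, ← add_smul, hab, one_smul]
      rwa [he] at h2
    have hfdiff : Differentiable ℝ (fun x' => F (x', z k)) :=
      hFdiff.comp (differentiable_id.prodMk (differentiable_const _))
    have hci := convex_grad_ineq (fun x' => F (x', z k)) hfconv hfdiff
      (x k) (x k + β ^ i • d k)
    have hq : x k - (x k + β ^ i • d k) = -(β ^ i • d k) := by abel
    rw [hq] at hci
    have hfd : fderiv ℝ (fun x' => F (x', z k)) (x k + β ^ i • d k) (-(β ^ i • d k)) =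
        -(β ^ i * B (x k + β ^ i • d k, z k) (d k)) := by
      rw [map_neg, map_smul, ← hgradB, inner_gradient_fderiv]
      simp
    rw [hfd] at hci
    have hβipos : (0 : ℝ) < β ^ i := pow_pos hβ0 i
    rw [hβi]
    nlinarith [hci, hfi]
    -- boundedness of the z-sequence
  have hzbdd : ∃ C : ℝ, ∀ k, ‖z k‖ ≤ C := by
    by_contra hC
    push_neg at hC
    choose κ hκ using hC
    set w0 : EuclideanSpace ℝ (Fin m) := z 0 with hw0
    set K : ℕ → ℕ := fun j => κ ((j : ℝ) + ‖w0‖) with hK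
    have hKnorm : ∀ j : ℕ, (j : ℝ) < ‖z (K j) - w0‖ := fun j => by
      have h1 := hκ ((j : ℝ) + ‖w0‖)
      have h2 := norm_sub_norm_le (z (K j)) w0
      linarith
    obtain ⟨xb, hxbX, ρ, hρ, hxlim⟩ := hX.tendsto_subseq (x := fun j => x (K j))
      (fun j => hxX (K j))
    set ℓ' : ℝ := max (F (x 0, z 0)) (F (xb, w0)) with hℓ'
    have hScomp := hinf xb hxbX ℓ'
    obtain ⟨M, hM⟩ := isBounded_iff_forall_norm_le.1 hScomp.isBounded
    set R : ℝ := |M| + ‖w0‖ + 1 with hR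
    have hRpos : 0 < R := by positivity
    set t : ℕ → ℝ := fun j => R / ‖z (K (ρ j)) - w0‖ with ht
    have hdenpos : ∀ j : ℕ, 1 ≤ j → 0 < ‖z (K (ρ j)) - w0‖ := fun j hj => by
      have := hKnorm (ρ j)
      have h2 : (j : ℝ) ≤ (ρ j : ℝ) := by exact_mod_cast hρ.id_le j
      have h3 : (1 : ℝ) ≤ (j : ℝ) := by exact_mod_cast hj
      linarith
    have htlim : Tendsto t atTop (𝓝 0) := by
      have hub : ∀ᶠ j : ℕ in atTop, t j ≤ R / j := by
        filter_upwards [eventually_ge_atTop 1] with j hj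
        have h1 := hdenpos j hj
        have h2 : (j : ℝ) ≤ ‖z (K (ρ j)) - w0‖ := by
          have := hKnorm (ρ j)
          have : (j : ℝ) ≤ (ρ j : ℝ) := by exact_mod_cast hρ.id_le j
          linarith [hKnorm (ρ j)]
        have h3 : (0 : ℝ) < j := by exact_mod_cast hj
        exact div_le_div_of_nonneg_left hRpos.le h3 h2
      have hlb : ∀ᶠ j : ℕ in atTop, 0 ≤ t j := by
        filter_upwards [eventually_ge_atTop 1] with j hj
        exact div_nonneg hRpos.le (norm_nonneg _)
      exact tendsto_of_tendsto_of_tendsto_of_le_of_le' tendsto_const_nhds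
        (tendsto_const_div_atTop_nhds_zero_nat R) hlb hub
    set v : ℕ → EuclideanSpace ℝ (Fin m) := fun j => w0 + t j • (z (K (ρ j)) - w0) with hv
    set u : ℕ → EuclideanSpace ℝ (Fin n) := fun j => xb + t j • (x (K (ρ j)) - xb) with hu
    have hprops : ∀ᶠ j : ℕ in atTop, v j ∈ Z ∧ ‖v j - w0‖ = R ∧ F (u j, v j) ≤ ℓ' := by
      filter_upwards [eventually_ge_atTop (⌈R⌉₊ + 1)] with j hj
      have hj1 : 1 ≤ j := le_trans (Nat.le_add_left 1 _) hj
      have hden := hdenpos j hj1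
      have hRden : R ≤ ‖z (K (ρ j)) - w0‖ := by
        have h1 : R ≤ (⌈R⌉₊ : ℝ) := Nat.le_ceil R
        have h2 : ((⌈R⌉₊ : ℕ) : ℝ) ≤ (j : ℝ) - 1 := by
          have h4 : ((⌈R⌉₊ : ℝ)) + 1 ≤ (j : ℝ) := by exact_mod_cast hj
          linarith
        have h3 : (j : ℝ) ≤ (ρ j : ℝ) := by exact_mod_cast hρ.id_le j
        linarith [hKnorm (ρ j)]
      have ht01 : t j ∈ Set.Icc (0 : ℝ) 1 := by
        constructor
        · exact div_nonneg hRpos.le (norm_nonneg _)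
        · rw [div_le_one hden]; exact hRden
      refine ⟨?_, ?_, ?_⟩
      · have : v j = (1 - t j) • w0 + t j • z (K (ρ j)) := by
          simp only [hv, smul_sub, sub_smul, one_smul]; abel
        rw [this]
        exact hZconv (hzZ 0) (hzZ (K (ρ j))) (by linarith [ht01.2]) ht01.1 (by ring)
      · have : v j - w0 = t j • (z (K (ρ j)) - w0) := by simp [hv]
        rw [this, norm_smul, Real.norm_eq_abs, abs_of_nonneg ht01.1, ht]
        field_simp
      · have hcomb := hFconv.2 (Set.mem_univ ((xb, w0) :
            EuclideanSpace ℝ (Fin n) × EuclideanSpace ℝ (Fin m)))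
          (Set.mem_univ (x (K (ρ j)), z (K (ρ j))))
          (by linarith [ht01.2] : (0:ℝ) ≤ 1 - t j) ht01.1 (by ring)
        have he : (1 - t j) • ((xb, w0) :
            EuclideanSpace ℝ (Fin n) × EuclideanSpace ℝ (Fin m)) +
            t j • (x (K (ρ j)), z (K (ρ j))) = (u j, v j) := by
          rw [Prod.smul_mk, Prod.smul_mk, Prod.mk_add_mk, Prod.mk.injEq]
          constructor
          · simp only [hu, smul_sub, sub_smul, one_smul]; abel
          · simp only [hv, smul_sub, sub_smul, one_smul]; abel
        rw [he] at hcomb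
        have h1 : F (xb, w0) ≤ ℓ' := le_max_right _ _
        have h2 : F (x (K (ρ j)), z (K (ρ j))) ≤ ℓ' :=
          le_trans (hFk0 _) (le_max_left _ _)
        calc F (u j, v j) ≤ (1 - t j) * F (xb, w0) + t j * F (x (K (ρ j)), z (K (ρ j))) := hcomb
          _ ≤ (1 - t j) * ℓ' + t j * ℓ' := by
              have := ht01.1; have := ht01.2
              gcongr <;> linarith
          _ = ℓ' := by ring
    -- extract a limit of v
    have hvfreq : ∃ᶠ j in atTop, v j ∈ Metric.sphere w0 R := by
      apply Eventually.frequently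
      filter_upwards [hprops] with j hjp
      simpa [Metric.mem_sphere, dist_eq_norm] using hjp.2.1
    obtain ⟨vb, hvbs, φ2, hφ2, hvlim⟩ := (isCompact_sphere w0 R).tendsto_subseq' hvfreq
    have hulim : Tendsto (fun i => u (φ2 i)) atTop (𝓝 xb) := by
      have h1 : Tendsto (fun j => x (K (ρ j)) - xb) atTop (𝓝 0) := by
        simpa using (hxlim.sub_const xb)
      have h2 : Tendsto (fun j => t j • (x (K (ρ j)) - xb)) atTop (𝓝 ((0:ℝ) • (0:EuclideanSpace ℝ (Fin n)))) :=
        htlim.smul h1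
      have h3 : Tendsto u atTop (𝓝 xb) := by
        have := (tendsto_const_nhds (x := xb) (f := atTop (α := ℕ))).add h2
        simpa using this
      exact h3.comp hφ2.tendsto_atTop
    have hvbZ : vb ∈ Z := by
      apply hZ.mem_of_tendsto hvlim
      filter_upwards [hφ2.tendsto_atTop.eventually hprops] with i hi
      exact hi.1
    have hvbF : F (xb, vb) ≤ ℓ' := by
      have hFlim : Tendsto (fun i => F (u (φ2 i), v (φ2 i))) atTop (𝓝 (F (xb, vb))) :=
        (hFcont.tendsto _).comp (hulim.prodMk_nhds hvlim)
      apply le_of_tendsto hFlim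
      filter_upwards [hφ2.tendsto_atTop.eventually hprops] with i hi
      exact hi.2.2
    have hvbS : vb ∈ {w ∈ Z | F (xb, w) ≤ ℓ'} := ⟨hvbZ, hvbF⟩
    have hnorm := hM vb hvbS
    have hdist : ‖vb - w0‖ = R := by
      simpa [dist_eq_norm] using hvbs
    have hge : R - ‖w0‖ ≤ ‖vb‖ := by
      have h5 := norm_sub_le vb w0
      linarith [hdist]
    rw [hR] at hge
    have := abs_nonneg M
    have := le_abs_self M
    linarith
  obtain ⟨C, hC⟩ := hzbdd
  constructor
  · -- existence of a cluster point
    have hcomp : IsCompact (X ×ˢ Metric.closedBall (0 : EuclideanSpace ℝ (Fin m)) C) :=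
      hX.prod (isCompact_closedBall 0 C)
    obtain ⟨p, hp, φ, hφ, hlim⟩ := hcomp.tendsto_subseq (x := fun k => (x k, z k))
      (fun k => ⟨hxX k, by simpa [Metric.mem_closedBall, dist_eq_norm] using hC k⟩)
    exact ⟨p, MapClusterPt.of_comp hφ.tendsto_atTop hlim.mapClusterPt⟩
  · intro xbar zbar hcp x' hx'
    by_contra hlt
    push_neg at hlt
    obtain ⟨ψ, hψ, hψlim⟩ := TopologicalSpace.FirstCountableTopology.tendsto_subseq hcp
    have hψlim' : Tendsto (fun k => (x (ψ k), z (ψ k))) atTop (𝓝 (xbar, zbar)) := hψlim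
    have hGR' : limsup (fun k => g (ψ k)) atTop < 0 := by
      have h0 := hGR ψ hψ xbar zbar hψlim' ⟨x' - xbar, ⟨x', hx', rfl⟩, hlt⟩
      have he : (fun k => ⟪gradient (fun x'' => F (x'', z (ψ k))) (x (ψ k)), d (ψ k)⟫)
          = fun k => g (ψ k) := funext fun k => hgradB _ _ _
      rwa [he] at h0
    set L : ℝ := limsup (fun k => g (ψ k)) atTop with hL
    have hbd : IsBoundedUnder (· ≤ ·) atTop (fun k => g (ψ k)) :=
      isBoundedUnder_of ⟨0, fun k => (hg0 (ψ k)).le⟩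
    have hev : ∀ᶠ k in atTop, g (ψ k) < L / 2 :=
      eventually_lt_of_limsup_lt (by linarith [hGR'] : L < L / 2) hbd
    -- F values converge
    have hFψ : Tendsto (fun k => F (x (ψ k), z (ψ k))) atTop (𝓝 (F (xbar, zbar))) :=
      (hFcont.tendsto _).comp hψlim'
    have hlow : ∀ k', F (xbar, zbar) ≤ F (x k', z k') := by
      intro k'
      apply le_of_tendsto hFψ
      filter_upwards [eventually_ge_atTop k'] with i hi
      exact hanti (le_trans hi (hψ.id_le i))
    have hbb : BddBelow (Set.range fun k => F (x k, z k)) :=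
      ⟨F (xbar, zbar), by rintro y ⟨k', rfl⟩; exact hlow k'⟩
    have htendF : Tendsto (fun k => F (x k, z k)) atTop (𝓝 (⨅ k, F (x k, z k))) :=
      tendsto_atTop_ciInf hanti hbb
    have hinfeq : (⨅ k, F (x k, z k)) = F (xbar, zbar) :=
      tendsto_nhds_unique (htendF.comp hψ.tendsto_atTop) hFψ
    rw [hinfeq] at htendF
    have hdiff0 : Tendsto (fun k => F (x (k + 1), z (k + 1)) - F (x k, z k)) atTop (𝓝 0) := by
      have h1 := (htendF.comp (tendsto_add_atTop_nat 1)).sub htendF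
      rw [sub_self] at h1
      exact h1
    have hsq : Tendsto (fun k => α k * σ * g k) atTop (𝓝 0) := by
      apply tendsto_of_tendsto_of_tendsto_of_le_of_le hdiff0 tendsto_const_nhds
      · intro k
        dsimp only
        linarith [hdecr k]
      · intro k
        dsimp only
        have h3 : 0 < α k * σ := mul_pos (hα_pos k) hσ0
        nlinarith [hg0 k]
    have hsqψ : Tendsto (fun k => α (ψ k) * σ * g (ψ k)) atTop (𝓝 0) :=
      hsq.comp hψ.tendsto_atTop
    -- α along ψ tends to zero
    have hαψ : Tendsto (fun k => α (ψ k)) atTop (𝓝 0) := by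
      have hpos : (0 : ℝ) < σ * (-(L / 2)) := by nlinarith [hGR']
      have hup : ∀ᶠ k in atTop, α (ψ k) ≤ -(α (ψ k) * σ * g (ψ k)) / (σ * (-(L / 2))) := by
        filter_upwards [hev] with k hk
        rw [le_div_iff₀ hpos]
        nlinarith [mul_pos (mul_pos (hα_pos (ψ k)) hσ0) (sub_pos.2 hk)]
      have hlim2 : Tendsto (fun k => -(α (ψ k) * σ * g (ψ k)) / (σ * (-(L / 2)))) atTop (𝓝 0) := by
        simpa using hsqψ.neg.div_const (σ * (-(L / 2)))
      refine tendsto_of_tendsto_of_tendsto_of_le_of_le' tendsto_const_nhds hlim2 ?_ hup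
      exact Eventually.of_forall fun k => (hα_pos (ψ k)).le
    -- bounded directions
    obtain ⟨Mx, hMx⟩ := isBounded_iff_forall_norm_le.1 hX.isBounded
    have hdb : ∀ k, d k ∈ Metric.closedBall (0 : EuclideanSpace ℝ (Fin n)) (2 * Mx) := by
      intro k
      rw [Metric.mem_closedBall, dist_zero_right]
      have h1 := hMx _ (hdX k)
      have h2 := hMx _ (hxX k)
      have h3 : d k = x k + d k - x k := by abel
      rw [h3]
      calc ‖x k + d k - x k‖ ≤ ‖x k + d k‖ + ‖x k‖ := norm_sub_le _ _
        _ ≤ 2 * Mx := by linarith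
    obtain ⟨db, hdbmem, φ, hφ, hdlim⟩ :=
      (isCompact_closedBall (0 : EuclideanSpace ℝ (Fin n)) (2 * Mx)).tendsto_subseq
        (x := fun k => d (ψ k)) (fun k => hdb (ψ k))
    -- limits along ψ ∘ φ
    have hxzφ : Tendsto (fun i => (x (ψ (φ i)), z (ψ (φ i)))) atTop (𝓝 (xbar, zbar)) :=
      hψlim'.comp hφ.tendsto_atTop
    have hxφ : Tendsto (fun i => x (ψ (φ i))) atTop (𝓝 xbar) :=
      (continuous_fst.tendsto _).comp hxzφ
    have hzφ : Tendsto (fun i => z (ψ (φ i))) atTop (𝓝 zbar) :=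
      (continuous_snd.tendsto _).comp hxzφ
    have hαφ : Tendsto (fun i => α (ψ (φ i))) atTop (𝓝 0) := hαψ.comp hφ.tendsto_atTop
    have hdlim' : Tendsto (fun i => d (ψ (φ i))) atTop (𝓝 db) := hdlim
    have hqlim : Tendsto (fun i => x (ψ (φ i)) + (α (ψ (φ i)) / β) • d (ψ (φ i)))
        atTop (𝓝 xbar) := by
      have h1 : Tendsto (fun i => α (ψ (φ i)) / β) atTop (𝓝 0) := by
        simpa using hαφ.div_const β
      have h2 := h1.smul hdlim'
      have h3 := hxφ.add h2
      simpa using h3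
    set Lb : ℝ := B (xbar, zbar) db with hLbdef
    have hBlim : Tendsto (fun i =>
        B (x (ψ (φ i)) + (α (ψ (φ i)) / β) • d (ψ (φ i)), z (ψ (φ i))) (d (ψ (φ i))))
        atTop (𝓝 Lb) :=
      (hBcont.tendsto ((xbar, zbar), db)).comp
        ((hqlim.prodMk_nhds hzφ).prodMk_nhds hdlim')
    have hglim : Tendsto (fun i => g (ψ (φ i))) atTop (𝓝 Lb) :=
      (hBcont.tendsto ((xbar, zbar), db)).comp
        ((hxφ.prodMk_nhds hzφ).prodMk_nhds hdlim')
    have hLbneg : Lb ≤ L / 2 := by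
      apply le_of_tendsto hglim
      filter_upwards [hφ.tendsto_atTop.eventually hev] with i hi
      exact hi.le
    have hineq : σ * Lb ≤ Lb := by
      have hevsmall : ∀ᶠ i in atTop, α (ψ (φ i)) < 1 := hαφ.eventually_lt_const one_pos
      apply le_of_tendsto_of_tendsto (hglim.const_mul σ) hBlim
      filter_upwards [hevsmall] with i hi
      exact hkey (ψ (φ i)) hi
    nlinarith [hineq, hLbneg, hGR']
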